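/- For every natural number n, the oscillator wave function φ_n is twice differentiable on ℝ and satisfies the differential equation φ_n''(x) = (x² − (2n+1)) φ_n(x) for all real x. -/

import Mathlib

open Real Filter MeasureTheory

/-- Physicists' Hermite polynomial `H_n(x) = (-1)^n e^{x²} (d^n/dx^n) e^{-x²}`. -/
noncomputable def physHermite (n : ℕ) (x : ℝ) : ℝ :=
  (-1 : ℝ) ^ n * Real.exp (x ^ 2) * iteratedDeriv n (fun t : ℝ => Real.exp (-t ^ 2)) x

/-- Normalizing constant `h_n = √π 2^n n!`. -/
noncomputable def hNorm (n : ℕ) : ℝ := Real.sqrt Real.pi * 2 ^ n * (n.factorial : ℝ)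

/-- Oscillator wave function `φ_n(x) = h_n^{-1/2} e^{-x²/2} H_n(x)`. -/
noncomputable def osc (n : ℕ) (x : ℝ) : ℝ :=
  hNorm n ^ (-(1 : ℝ) / 2) * Real.exp (-x ^ 2 / 2) * physHermite n x

/-- Airy function `Ai(x) = π⁻¹ lim_{R→∞} ∫₀^R cos(t³/3 + xt) dt`. -/
noncomputable def Ai (x : ℝ) : ℝ :=
  Real.pi⁻¹ *
    limUnder Filter.atTop (fun R : ℝ => ∫ t in (0 : ℝ)..R, Real.cos (t ^ 3 / 3 + x * t))

/-- Scaling constant `τ_N = 2^{-1/2} N^{-1/6}`. -/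
noncomputable def tauN (N : ℕ) : ℝ := (2 : ℝ) ^ (-(1 : ℝ) / 2) * (N : ℝ) ^ (-(1 : ℝ) / 6)

/-- `Δ_N = (√(2N+1) - √(2N-1))/τ_N`. -/
noncomputable def DeltaN (N : ℕ) : ℝ :=
  (Real.sqrt (2 * N + 1) - Real.sqrt (2 * N - 1)) / tauN N

/-! ### Auxiliary lemmas -/

/-- Iterated derivatives of the Gaussian. -/
noncomputable def gaussD (n : ℕ) : ℝ → ℝ := iteratedDeriv n (fun t : ℝ => Real.exp (-t ^ 2))

lemma gauss_smooth : ContDiff ℝ ⊤ (fun t : ℝ => Real.exp (-t ^ 2)) :=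
  Real.contDiff_exp.comp ((contDiff_id.pow 2).neg)

lemma gaussD_diff (n : ℕ) : Differentiable ℝ (gaussD n) :=
  gauss_smooth.differentiable_iteratedDeriv n (by exact_mod_cast WithTop.coe_lt_top (n : ℕ∞))

lemma deriv_gaussD (n : ℕ) : deriv (gaussD n) = gaussD (n + 1) :=
  (iteratedDeriv_succ).symm

lemma gaussD_hasDerivAt (n : ℕ) (x : ℝ) : HasDerivAt (gaussD n) (gaussD (n + 1) x) x := by
  have h := ((gaussD_diff n) x).hasDerivAt
  rwa [deriv_gaussD] at h

lemma gaussD_rec (n : ℕ) (x : ℝ) :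
    gaussD (n + 1) x = -(2 * x) * gaussD n x - 2 * n * gaussD (n - 1) x := by
  induction n generalizing x with
  | zero =>
      have h : HasDerivAt (fun t : ℝ => Real.exp (-t ^ 2))
          (Real.exp (-x ^ 2) * (-(2 * x ^ 1))) x := ((hasDerivAt_pow 2 x).neg).exp
      have h0 : gaussD 1 x = deriv (fun t : ℝ => Real.exp (-t ^ 2)) x := by
        rw [← deriv_gaussD]; rfl
      rw [h0, h.deriv]
      simp [gaussD, iteratedDeriv_zero]
      ring
  | succ n ih =>
      have hfun : gaussD (n + 1) = fun y => -(2 * y) * gaussD n y - 2 * n * gaussD (n - 1) y :=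
        funext fun y => ih y
      have h1 : HasDerivAt (fun y : ℝ => -(2 * y) * gaussD n y - 2 * n * gaussD (n - 1) y)
          ((-2 * 1) * gaussD n x + (-(2 * x)) * gaussD (n + 1) x
            - 2 * n * gaussD (n - 1 + 1) x) x := by
        have ha : HasDerivAt (fun y : ℝ => -(2 * y)) (-2 * 1) x := by
          exact (((hasDerivAt_id x).const_mul (2 : ℝ)).neg).congr_deriv (by ring)
        exact (ha.mul (gaussD_hasDerivAt n x)).sub
          ((gaussD_hasDerivAt (n - 1) x).const_mul ((2 : ℝ) * n))
      have h2 : gaussD (n + 1 + 1) x = deriv (gaussD (n + 1)) x := by rw [deriv_gaussD]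
      have h3 : deriv (gaussD (n + 1)) x
          = (-2 * 1) * gaussD n x + (-(2 * x)) * gaussD (n + 1) x
            - 2 * n * gaussD (n - 1 + 1) x := by
        conv_lhs => rw [hfun]
        exact h1.deriv
      rw [h2, h3]
      have hc : (2 : ℝ) * n * gaussD (n - 1 + 1) x = 2 * n * gaussD n x := by
        cases n with
        | zero => simp
        | succ m => simp
      rw [hc]
      push_cast
      ring

lemma physHermite_hasDerivAt (n : ℕ) (x : ℝ) :
    HasDerivAt (physHermite n) (2 * x * physHermite n x - physHermite (n + 1) x) x := by
  have h1 : HasDerivAt (fun y : ℝ => Real.exp (y ^ 2)) (Real.exp (x ^ 2) * (2 * x ^ 1)) x := by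
    simpa using (hasDerivAt_pow 2 x).exp
  have h := (h1.const_mul ((-1 : ℝ) ^ n)).mul (gaussD_hasDerivAt n x)
  have heq : physHermite n = fun y => (-1 : ℝ) ^ n * Real.exp (y ^ 2) * gaussD n y := rfl
  rw [heq]
  refine h.congr_deriv ?_
  simp only [physHermite, gaussD, pow_succ]
  ring

lemma physHermite_diff (n : ℕ) : Differentiable ℝ (physHermite n) :=
  fun x => (physHermite_hasDerivAt n x).differentiableAt

lemma physHermite_rec (n : ℕ) (x : ℝ) :
    physHermite (n + 2) x = 2 * x * physHermite (n + 1) x - 2 * (n + 1) * physHermite n x := by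
  have h := gaussD_rec (n + 1) x
  have hs : n + 1 - 1 = n := rfl
  rw [hs] at h
  simp only [physHermite, gaussD] at h ⊢
  rw [show n + 2 = n + 1 + 1 from rfl, h]
  simp only [pow_succ]
  push_cast
  ring

lemma exp_hasDerivAt (x : ℝ) :
    HasDerivAt (fun y : ℝ => Real.exp (-y ^ 2 / 2)) (-x * Real.exp (-x ^ 2 / 2)) x := by
  have h : HasDerivAt (fun y : ℝ => -y ^ 2 / 2) (-x) x := by
    have := ((hasDerivAt_pow 2 x).neg).div_const 2
    refine this.congr_deriv ?_
    push_cast; ring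
  simpa [mul_comm] using h.exp

lemma osc_hasDerivAt (n : ℕ) (x : ℝ) :
    HasDerivAt (osc n) (hNorm n ^ (-(1 : ℝ) / 2) * Real.exp (-x ^ 2 / 2) *
      (x * physHermite n x - physHermite (n + 1) x)) x := by
  have h := (((exp_hasDerivAt x).const_mul (hNorm n ^ (-(1 : ℝ) / 2))).mul
    (physHermite_hasDerivAt n x))
  have heq : osc n = fun y => hNorm n ^ (-(1 : ℝ) / 2) * Real.exp (-y ^ 2 / 2) *
      physHermite n y := rfl
  rw [heq]
  refine h.congr_deriv ?_
  ring

lemma deriv_osc (n : ℕ) : deriv (osc n) = fun x => hNorm n ^ (-(1 : ℝ) / 2) *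
    Real.exp (-x ^ 2 / 2) * (x * physHermite n x - physHermite (n + 1) x) :=
  funext fun x => (osc_hasDerivAt n x).deriv

lemma osc_deriv_hasDerivAt (n : ℕ) (x : ℝ) :
    HasDerivAt (fun y => hNorm n ^ (-(1 : ℝ) / 2) * Real.exp (-y ^ 2 / 2) *
      (y * physHermite n y - physHermite (n + 1) y))
      ((x ^ 2 - (2 * n + 1)) * osc n x) x := by
  have hinner : HasDerivAt (fun y : ℝ => y * physHermite n y - physHermite (n + 1) y)
      ((1 * physHermite n x + x * (2 * x * physHermite n x - physHermite (n + 1) x))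
        - (2 * x * physHermite (n + 1) x - physHermite (n + 2) x)) x :=
    ((hasDerivAt_id x).mul (physHermite_hasDerivAt n x)).sub (physHermite_hasDerivAt (n + 1) x)
  have h := ((exp_hasDerivAt x).const_mul (hNorm n ^ (-(1 : ℝ) / 2))).mul hinner
  refine h.congr_deriv ?_
  rw [physHermite_rec n x]
  simp only [osc]
  ring

theorem oscillator_wave_function_ode (n : ℕ) :
    Differentiable ℝ (osc n) ∧ Differentiable ℝ (deriv (osc n)) ∧
    ∀ x : ℝ, deriv (deriv (osc n)) x = (x ^ 2 - (2 * n + 1)) * osc n x := by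
  refine ⟨fun x => (osc_hasDerivAt n x).differentiableAt, ?_, ?_⟩
  · rw [deriv_osc]
    exact fun x => (osc_deriv_hasDerivAt n x).differentiableAt
  · intro x
    rw [deriv_osc]
    exact (osc_deriv_hasDerivAt n x).deriv
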